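/- Let Z = (Z_i)_{i≥0} be a Markov chain on a complete separable metric space (𝒳,d) with transition kernel P, unique invariant distribution π, and pseudo spectral gap γ_ps > 0, and suppose it satisfies the stationary Bernstein inequality P^π(Σ_{i=0}^{n−1}(f(Z_i)−π(f)) ≥ x) ≤ exp(−γ_ps x² / (8(n+γ_ps^{−1})σ²(f) + 20‖f−π(f)‖_∞ x)) for all bounded measurable f and x > 0, where σ²(f) := π(f²) − π(f)². If μ ≪ π with dμ/dπ ∈ L^p(π) for some p ∈ (1,∞], then for every bounded measurable f : 𝒳 → ℝ and x > 0, P^μ( Σ_{i=0}^{n−1}(f(Z_i) − π(f)) ≥ x ) ≤ ‖dμ/dπ‖_{L^p(π)} exp( −(1/p̄) · γ_ps x² / (8(n+γ_ps^{−1})σ²(f) + 20‖f−π(f)‖_∞ x) ). -/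

import Mathlib

open MeasureTheory ProbabilityTheory
open scoped ENNReal

/-- Conjugate Hölder exponent: `p̄ = p/(p-1)` for finite `p`, and `p̄ = 1` for `p = ∞`. -/
noncomputable def conjExp (p : ℝ≥0∞) : ℝ :=
  if p = ∞ then 1 else p.toReal / (p.toReal - 1)

/-- Sup-norm deviation `‖f - π(f)‖_∞`. -/
noncomputable def supDev {X : Type*} [MeasurableSpace X] (π : Measure X) (f : X → ℝ) : ℝ :=
  ⨆ x, |f x - ∫ y, f y ∂π|

/-- Variance `σ²(f) = π(f²) - π(f)²`. -/
noncomputable def varPi {X : Type*} [MeasurableSpace X] (π : Measure X) (f : X → ℝ) : ℝ :=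
  (∫ y, f y ^ 2 ∂π) - (∫ y, f y ∂π) ^ 2

/-- Warm-start Bernstein inequality: if a Markov chain with pseudo spectral gap
`γ > 0` satisfies the stationary Bernstein inequality (under the stationary path
law `Prπ`, with `Z₀ ∼ π`), and `μ ≪ π` with `dμ/dπ ∈ L^p(π)`, `p ∈ (1,∞]`, then
under the warm-start path law `P^μ = (dμ/dπ)(Z₀) dP^π` one has, for every bounded
measurable `f` and `x > 0`,
`P^μ(Σ_{i<n}(f(Z_i)-π(f)) ≥ x) ≤ ‖dμ/dπ‖_{L^p(π)} exp(-(1/p̄)·γx²/(8(n+γ⁻¹)σ²(f)+20‖f-π(f)‖_∞x))`. -/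
theorem warm_start_bernstein
    {X : Type*} [MetricSpace X] [CompleteSpace X] [TopologicalSpace.SeparableSpace X]
    [MeasurableSpace X] [BorelSpace X]
    {Ω : Type*} [MeasurableSpace Ω]
    (Prπ : Measure Ω) [IsProbabilityMeasure Prπ]
    (P : Kernel X X) [IsMarkovKernel P]
    (π μ : Measure X) [IsProbabilityMeasure π] [IsProbabilityMeasure μ]
    -- `π` is the unique invariant distribution of `P`
    (hinv : π.bind (fun x => P x) = π)
    (huniq : ∀ π' : Measure X, IsProbabilityMeasure π' →
      π'.bind (fun x => P x) = π' → π' = π)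
    -- under `Prπ`, `Z` is a stationary Markov chain with kernel `P` and `Z₀ ∼ π`
    (Z : ℕ → Ω → X) (hZmeas : ∀ i, Measurable (Z i))
    (hZ0 : Prπ.map (Z 0) = π)
    (hstep : ∀ i, Prπ.map (fun ω => (Z i ω, Z (i + 1) ω)) = (Prπ.map (Z i)).compProd P)
    -- pseudo spectral gap `γ > 0` and the stationary Bernstein inequality
    (γ : ℝ) (hγ : 0 < γ)
    (hBernstein : ∀ g : X → ℝ, Measurable g → (∃ M, ∀ x, |g x| ≤ M) →
      ∀ (m : ℕ) (x : ℝ), 0 < x →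
        Prπ {ω | x ≤ ∑ i ∈ Finset.range m, (g (Z i ω) - ∫ y, g y ∂π)} ≤
          ENNReal.ofReal (Real.exp (-(γ * x ^ 2) /
            (8 * ((m : ℝ) + γ⁻¹) * varPi π g + 20 * supDev π g * x))))
    -- warm start: `μ ≪ π` with `dμ/dπ ∈ L^p(π)` for some `p ∈ (1,∞]`
    (p : ℝ≥0∞) (hp : 1 < p) (hac : μ ≪ π)
    (hrn : MemLp (fun x => (μ.rnDeriv π x).toReal) p π)
    -- conclusion, for every bounded measurable `f`, every `n` and every `x > 0`,
    -- under the warm-start law `P^μ = (dμ/dπ)(Z₀) dP^π`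
    (f : X → ℝ) (hfmeas : Measurable f) (hfb : ∃ M, ∀ x, |f x| ≤ M)
    (n : ℕ) (x : ℝ) (hx : 0 < x) :
    (Prπ.withDensity (fun ω => μ.rnDeriv π (Z 0 ω)))
        {ω | x ≤ ∑ i ∈ Finset.range n, (f (Z i ω) - ∫ y, f y ∂π)} ≤
      eLpNorm (fun y => (μ.rnDeriv π y).toReal) p π *
        ENNReal.ofReal (Real.exp (-(1 / conjExp p) * (γ * x ^ 2) /
          (8 * ((n : ℝ) + γ⁻¹) * varPi π f + 20 * supDev π f * x))) := by
  classical
  have hSmeas : Measurable fun ω => ∑ i ∈ Finset.range n, (f (Z i ω) - ∫ y, f y ∂π) := by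
    apply Finset.measurable_sum
    intro i _
    exact (hfmeas.comp (hZmeas i)).sub measurable_const
  set A : Set Ω := {ω | x ≤ ∑ i ∈ Finset.range n, (f (Z i ω) - ∫ y, f y ∂π)} with hAdef
  have hAmeas : MeasurableSet A := measurableSet_le measurable_const hSmeas
  set h : Ω → ℝ≥0∞ := fun ω => μ.rnDeriv π (Z 0 ω) with hhdef
  have hhmeas : Measurable h := (Measure.measurable_rnDeriv μ π).comp (hZmeas 0)
  have hfin : ∀ᵐ ω ∂Prπ, h ω ≠ ∞ := by
    have h1 : ∀ᵐ y ∂(Prπ.map (Z 0)), μ.rnDeriv π y < ∞ := by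
      rw [hZ0]; exact Measure.rnDeriv_lt_top μ π
    have h2 := (ae_map_iff (hZmeas 0).aemeasurable
      (measurableSet_lt (Measure.measurable_rnDeriv μ π) measurable_const)).mp h1
    filter_upwards [h2] with ω hω using hω.ne
  have henorm : ∀ᵐ ω ∂Prπ, ((‖(h ω).toReal‖₊ : ℝ≥0∞)) = h ω := by
    filter_upwards [hfin] with ω hω
    rw [← enorm_eq_nnnorm, Real.enorm_eq_ofReal ENNReal.toReal_nonneg, ENNReal.ofReal_toReal hω]
  -- transfer of the Lp norm from π to Prπ
  have hmap : eLpNorm (fun y => (μ.rnDeriv π y).toReal) p π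
      = eLpNorm (fun ω => (h ω).toReal) p Prπ := by
    have e1 : eLpNorm (fun y => (μ.rnDeriv π y).toReal) p (Prπ.map (Z 0))
        = eLpNorm ((fun y => (μ.rnDeriv π y).toReal) ∘ (Z 0)) p Prπ :=
      eLpNorm_map_measure
        (Measure.measurable_rnDeriv μ π).ennreal_toReal.aestronglyMeasurable
        (hZmeas 0).aemeasurable
    rw [hZ0] at e1
    exact e1
  have hPA := hBernstein f hfmeas hfb n x hx
  set D : ℝ := 8 * ((n : ℝ) + γ⁻¹) * varPi π f + 20 * supDev π f * x with hDdef
  rw [withDensity_apply _ hAmeas]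
  by_cases hptop : p = ∞
  · -- p = ∞, conjugate exponent is 1
    have hconj : conjExp p = 1 := by simp [conjExp, hptop]
    calc ∫⁻ ω in A, h ω ∂Prπ
        ≤ ∫⁻ _ in A, eLpNormEssSup (fun ω => (h ω).toReal) Prπ ∂Prπ := by
          refine lintegral_mono_ae (ae_restrict_of_ae ?_)
          filter_upwards [henorm, ENNReal.ae_le_essSup fun ω => ((‖(h ω).toReal‖₊ : ℝ≥0∞))]
            with ω h1 h2
          rw [← h1]
          exact h2
      _ = eLpNormEssSup (fun ω => (h ω).toReal) Prπ * Prπ A := by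
          rw [setLIntegral_const]
      _ ≤ eLpNorm (fun y => (μ.rnDeriv π y).toReal) p π *
            ENNReal.ofReal (Real.exp (-(1 / conjExp p) * (γ * x ^ 2) / D)) := by
          refine mul_le_mul' ?_ ?_
          · rw [hmap, hptop, eLpNorm_exponent_top]
          · refine le_trans hPA (le_of_eq ?_)
            congr 1
            rw [hconj]
            ring
  · -- 1 < p < ∞
    have hpr : 1 < p.toReal := by
      rw [← ENNReal.toReal_one]
      exact (ENNReal.toReal_lt_toReal ENNReal.one_ne_top hptop).mpr hp
    have hq : p.toReal.HolderConjugate (conjExp p) := by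
      have := Real.HolderConjugate.conjExponent hpr
      simpa [conjExp, hptop, Real.conjExponent] using this
    have hqpos : 0 < conjExp p := hq.symm.pos
    set g2 : Ω → ℝ≥0∞ := A.indicator fun _ => 1 with hg2def
    have hg2meas : Measurable g2 := measurable_const.indicator hAmeas
    have hmul : ∀ ω, A.indicator h ω = h ω * g2 ω := by
      intro ω
      simp only [hg2def, Set.indicator_apply]
      split_ifs <;> simp
    have hHolder := ENNReal.lintegral_mul_le_Lp_mul_Lq Prπ hq hhmeas.aemeasurable
      hg2meas.aemeasurable
    have hleft : ∫⁻ ω in A, h ω ∂Prπ = ∫⁻ ω, h ω * g2 ω ∂Prπ := by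
      rw [← lintegral_indicator hAmeas]
      exact lintegral_congr fun ω => hmul ω
    have hLp : (∫⁻ ω, h ω ^ p.toReal ∂Prπ) ^ (1 / p.toReal)
        = eLpNorm (fun ω => (h ω).toReal) p Prπ := by
      rw [eLpNorm_eq_lintegral_rpow_enorm_toReal (by positivity) hptop]
      congr 1
      refine lintegral_congr_ae ?_
      filter_upwards [henorm] with ω hω
      rw [enorm_eq_nnnorm, hω]
    have hLq : (∫⁻ ω, g2 ω ^ conjExp p ∂Prπ) ^ (1 / conjExp p)
        = Prπ A ^ (1 / conjExp p) := by
      congr 1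
      have hpow : ∀ ω, g2 ω ^ conjExp p = g2 ω := by
        intro ω
        simp only [hg2def, Set.indicator_apply]
        split_ifs
        · simp
        · exact ENNReal.zero_rpow_of_pos hqpos
      have hg2int : ∫⁻ ω, g2 ω ∂Prπ = Prπ A := by
        rw [hg2def, lintegral_indicator hAmeas, setLIntegral_one]
      exact (lintegral_congr hpow).trans hg2int
    have hexp : (Prπ A) ^ (1 / conjExp p) ≤
        ENNReal.ofReal (Real.exp (-(1 / conjExp p) * (γ * x ^ 2) / D)) := by
      calc (Prπ A) ^ (1 / conjExp p)
          ≤ (ENNReal.ofReal (Real.exp (-(γ * x ^ 2) / D))) ^ (1 / conjExp p) :=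
            ENNReal.rpow_le_rpow hPA (by positivity)
        _ = ENNReal.ofReal ((Real.exp (-(γ * x ^ 2) / D)) ^ (1 / conjExp p)) :=
            ENNReal.ofReal_rpow_of_pos (Real.exp_pos _)
        _ = ENNReal.ofReal (Real.exp (-(1 / conjExp p) * (γ * x ^ 2) / D)) := by
            rw [← Real.exp_mul]
            congr 1
            ring
    calc ∫⁻ ω in A, h ω ∂Prπ
        ≤ (∫⁻ ω, h ω ^ p.toReal ∂Prπ) ^ (1 / p.toReal) *
            (∫⁻ ω, g2 ω ^ conjExp p ∂Prπ) ^ (1 / conjExp p) := by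
          rw [hleft]; exact hHolder
      _ = eLpNorm (fun ω => (h ω).toReal) p Prπ * Prπ A ^ (1 / conjExp p) := by
          rw [hLp, hLq]
      _ ≤ eLpNorm (fun y => (μ.rnDeriv π y).toReal) p π *
            ENNReal.ofReal (Real.exp (-(1 / conjExp p) * (γ * x ^ 2) / D)) := by
          rw [hmap]
          exact mul_le_mul' le_rfl hexp
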